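/- For any twice continuously differentiable function f : ℝ → ℝ and any real numbers a < b, one has ∫ₐᵇ f'(x)² dx ≤ 2 (b-a)² ∫ₐᵇ f''(x)² dx + 2 (f(b) - f(a))² / (b-a). -/

import Mathlib

open Real MeasureTheory Set

/-- Cauchy–Schwarz for interval integrals of continuous functions. -/
lemma cs_interval (g : ℝ → ℝ) (hg : Continuous g) (u v : ℝ) (huv : u ≤ v) :
    (∫ t in u..v, g t) ^ 2 ≤ (v - u) * ∫ t in u..v, g t ^ 2 := by
  set μ := volume.restrict (Set.Ioc u v) with hμ
  have hconj : Real.HolderConjugate 2 2 := Real.HolderConjugate.two_two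
  have hsq_int : Integrable (fun t => g t ^ 2) μ := by
    rw [hμ, ← IntegrableOn]
    exact (hg.pow 2).integrableOn_Ioc
  have hg2 : MemLp (fun t => |g t|) (ENNReal.ofReal 2) μ := by
    rw [show ENNReal.ofReal 2 = 2 by norm_num]
    refine (memLp_two_iff_integrable_sq ?_).2 ?_
    · exact (hg.abs).aestronglyMeasurable
    · simpa [sq_abs] using hsq_int
  have h1 : MemLp (fun _ : ℝ => (1 : ℝ)) (ENNReal.ofReal 2) μ := memLp_const 1
  have hholder := integral_mul_le_Lp_mul_Lq_of_nonneg hconj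
    (f := fun t => |g t|) (g := fun _ => (1 : ℝ))
    (Filter.Eventually.of_forall fun t => abs_nonneg _)
    (Filter.Eventually.of_forall fun t => zero_le_one) hg2 h1
  have hmeas : (μ Set.univ).toReal = v - u := by
    rw [hμ]
    simp [Real.volume_Ioc, ENNReal.toReal_ofReal (sub_nonneg.2 huv)]
  have hone : (∫ _ : ℝ, (1 : ℝ) ^ (2 : ℝ) ∂μ) = v - u := by
    simp [hmeas]
    exact hmeas
  have habs_rpow : ∀ t : ℝ, |g t| ^ (2 : ℝ) = g t ^ 2 := by
    intro t
    rw [show (2 : ℝ) = ((2 : ℕ) : ℝ) by norm_num, Real.rpow_natCast, sq_abs]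
  have hA : (∫ t, |g t| ^ (2 : ℝ) ∂μ) = ∫ t, g t ^ 2 ∂μ := by
    simp only [habs_rpow]
  rw [hA, hone] at hholder
  simp only [mul_one] at hholder
  have hIu : (∫ t in u..v, g t) = ∫ t, g t ∂μ := by
    rw [intervalIntegral.integral_of_le huv]
  have hIu2 : (∫ t in u..v, g t ^ 2) = ∫ t, g t ^ 2 ∂μ := by
    rw [intervalIntegral.integral_of_le huv]
  have hAnn : 0 ≤ ∫ t, g t ^ 2 ∂μ := integral_nonneg fun t => sq_nonneg _
  have hBnn : 0 ≤ v - u := sub_nonneg.2 huv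
  have habs : |∫ t, g t ∂μ| ≤ ∫ t, |g t| ∂μ := by
    simpa [Real.norm_eq_abs] using norm_integral_le_integral_norm (f := g) (μ := μ)
  have habs_nn : (0:ℝ) ≤ ∫ t, |g t| ∂μ := integral_nonneg fun t => abs_nonneg _
  rw [hIu, hIu2]
  calc (∫ t, g t ∂μ) ^ 2 = |∫ t, g t ∂μ| ^ 2 := (sq_abs _).symm
    _ ≤ (∫ t, |g t| ∂μ) ^ 2 := by
        exact pow_le_pow_left₀ (abs_nonneg _) habs 2
    _ ≤ ((∫ t, g t ^ 2 ∂μ) ^ (1/(2:ℝ)) * (v - u) ^ (1/(2:ℝ))) ^ 2 := by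
        refine pow_le_pow_left₀ habs_nn hholder 2
    _ = (v - u) * ∫ t, g t ^ 2 ∂μ := by
        rw [mul_pow, ← Real.rpow_natCast ((∫ t, g t ^ 2 ∂μ) ^ (1/(2:ℝ))) 2,
          ← Real.rpow_natCast ((v - u) ^ (1/(2:ℝ))) 2,
          ← Real.rpow_mul hAnn, ← Real.rpow_mul hBnn]
        norm_num
        ring

theorem stmt_1 (f : ℝ → ℝ) (hf : ContDiff ℝ 2 f) (a b : ℝ) (hab : a < b) :
    (∫ x in a..b, (deriv f x) ^ 2) ≤
      2 * (b - a) ^ 2 * (∫ x in a..b, (deriv (deriv f) x) ^ 2)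
        + 2 * (f b - f a) ^ 2 / (b - a) := by
  have hab' : a ≤ b := hab.le
  have hba : 0 < b - a := sub_pos.2 hab
  -- g := deriv f is C¹, g' := deriv (deriv f) is continuous
  have hf1 : ContDiff ℝ 1 (deriv f) := by
    have h := (contDiff_succ_iff_deriv (n := 1)).mp (by norm_num; exact hf)
    exact h.2.2
  have hgc : Continuous (deriv f) := hf1.continuous
  have hg'c : Continuous (deriv (deriv f)) := hf1.continuous_deriv le_rfl
  have hgd : Differentiable ℝ (deriv f) := hf1.differentiable one_ne_zero
  -- mean value theorem
  obtain ⟨c, hc, hderiv_c⟩ := exists_deriv_eq_slope f hab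
    (hf.continuous.continuousOn) (fun x _ => ((hf.differentiable two_ne_zero) x).differentiableWithinAt)
  have hca : a ≤ c := hc.1.le
  have hcb : c ≤ b := hc.2.le
  set K := ∫ x in a..b, (deriv (deriv f) x) ^ 2 with hK
  have hKnn : 0 ≤ K := by
    rw [hK, intervalIntegral.integral_of_le hab']
    exact integral_nonneg fun t => sq_nonneg _
  -- FTC: deriv f x = deriv f c + ∫ t in c..x, deriv (deriv f) t
  have hftc : ∀ x : ℝ, deriv f x = deriv f c + ∫ t in c..x, deriv (deriv f) t := by
    intro x
    have := intervalIntegral.integral_deriv_eq_sub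
      (f := deriv f) (a := c) (b := x)
      (fun y _ => hgd y) (hg'c.intervalIntegrable c x)
    linarith [this]
  -- key pointwise bound
  have hbound : ∀ x ∈ Set.Icc a b,
      (deriv f x) ^ 2 ≤ 2 * (deriv f c) ^ 2 + 2 * (b - a) * K := by
    intro x hx
    have hsub : (∫ t in c..x, deriv (deriv f) t) ^ 2 ≤ (b - a) * K := by
      rcases le_total c x with hcx | hxc
      · have h1 : (∫ t in c..x, deriv (deriv f) t) ^ 2 ≤
            (x - c) * ∫ t in c..x, (deriv (deriv f) t) ^ 2 :=
          cs_interval _ hg'c c x hcx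
        have h2 : (∫ t in c..x, (deriv (deriv f) t) ^ 2) ≤ K := by
          rw [hK]
          refine intervalIntegral.integral_mono_interval hca hcx hx.2 ?_ ?_
          · exact Filter.Eventually.of_forall fun t => sq_nonneg _
          · exact ((hg'c.pow 2).intervalIntegrable a b)
        have h3 : (∫ t in c..x, (deriv (deriv f) t) ^ 2) ≥ 0 := by
          rw [intervalIntegral.integral_of_le hcx]
          exact integral_nonneg fun t => sq_nonneg _
        nlinarith [sub_nonneg.2 hx.2, sub_nonneg.2 hca, sub_nonneg.2 hcx]
      · have h1 : (∫ t in x..c, deriv (deriv f) t) ^ 2 ≤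
            (c - x) * ∫ t in x..c, (deriv (deriv f) t) ^ 2 :=
          cs_interval _ hg'c x c hxc
        have h2 : (∫ t in x..c, (deriv (deriv f) t) ^ 2) ≤ K := by
          rw [hK]
          refine intervalIntegral.integral_mono_interval hx.1 hxc hcb ?_ ?_
          · exact Filter.Eventually.of_forall fun t => sq_nonneg _
          · exact ((hg'c.pow 2).intervalIntegrable a b)
        have h3 : (∫ t in x..c, (deriv (deriv f) t) ^ 2) ≥ 0 := by
          rw [intervalIntegral.integral_of_le hxc]
          exact integral_nonneg fun t => sq_nonneg _
        have hsymm : (∫ t in c..x, deriv (deriv f) t) = - ∫ t in x..c, deriv (deriv f) t :=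
          intervalIntegral.integral_symm x c
        rw [hsymm, neg_sq]
        nlinarith [sub_nonneg.2 hx.1, sub_nonneg.2 hcb, sub_nonneg.2 hxc]
    have heq := hftc x
    rw [heq]
    nlinarith [sq_nonneg (deriv f c - ∫ t in c..x, deriv (deriv f) t), hsub]
  -- integrate the bound
  have hint : (∫ x in a..b, (deriv f x) ^ 2) ≤
      (b - a) * (2 * (deriv f c) ^ 2 + 2 * (b - a) * K) := by
    have := intervalIntegral.integral_mono_on hab'
      ((hgc.pow 2).intervalIntegrable a b)
      (intervalIntegrable_const (μ := volume) (c := 2 * (deriv f c) ^ 2 + 2 * (b - a) * K))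
      hbound
    simp only [intervalIntegral.integral_const, smul_eq_mul] at this
    simpa only [Pi.pow_apply] using this
  have hc2 : (deriv f c) ^ 2 = (f b - f a) ^ 2 / (b - a) ^ 2 := by
    rw [hderiv_c, div_pow]
  have hfinal : (b - a) * (2 * (deriv f c) ^ 2 + 2 * (b - a) * K)
      = 2 * (b - a) ^ 2 * K + 2 * (f b - f a) ^ 2 / (b - a) := by
    rw [hc2]
    field_simp
    ring
  linarith [hint, hfinal.le, hfinal.ge]
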